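/- Let X ∈ ℝ^{n×n} be symmetric and tridiagonal, and let α, β ∈ ℝ and c > 0. Then for every 1 ≤ k < n, the off-diagonal blocks of the matrix α·X + β·X·(I + c·X²)⁻¹ have rank at most 3. In particular, the first iterate X₁ = (b₀/c₀)·X₀ + (a₀ − b₀/c₀)·X₀·(I + c₀·X₀²)⁻¹ of the QDWH algorithm applied to a symmetric tridiagonal matrix X₀ has all off-diagonal blocks of rank at most 3. -/

import Mathlib

open Matrix

/-- The upper off-diagonal block `M(1:k, k+1:n)` of a square matrix. -/
def offUpper {α : Type*} {n : ℕ} (M : Matrix (Fin n) (Fin n) α) (k : ℕ) (hk : k < n) :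
    Matrix (Fin k) (Fin (n - k)) α :=
  M.submatrix (fun i => ⟨i.1, i.2.trans hk⟩) (fun j => ⟨k + j.1, by omega⟩)

/-- The lower off-diagonal block `M(k+1:n, 1:k)` of a square matrix. -/
def offLower {α : Type*} {n : ℕ} (M : Matrix (Fin n) (Fin n) α) (k : ℕ) (hk : k < n) :
    Matrix (Fin (n - k)) (Fin k) α :=
  M.submatrix (fun i => ⟨k + i.1, by omega⟩) (fun j => ⟨j.1, j.2.trans hk⟩)

/-- Splitting a sum over `Fin n` into indices `< k` and indices `≥ k`. -/
lemma finSplit {M : Type*} [AddCommMonoid M] {n k : ℕ} (hk : k < n) (f : Fin n → M) :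
    ∑ l, f l = (∑ i : Fin k, f ⟨i.1, i.2.trans hk⟩) +
      ∑ j : Fin (n - k), f ⟨k + j.1, by omega⟩ := by
  rw [← Equiv.sum_comp ((finSumFinEquiv (m := k) (n := n - k)).trans
      (finCongr (by omega))) f, Fintype.sum_sum_type]
  congr 1

/-- The upper-left `k × k` block. -/
def ulBlock {n : ℕ} (M : Matrix (Fin n) (Fin n) ℝ) (k : ℕ) (hk : k < n) :
    Matrix (Fin k) (Fin k) ℝ :=
  M.submatrix (fun i => ⟨i.1, i.2.trans hk⟩) (fun j => ⟨j.1, j.2.trans hk⟩)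

/-- The lower-right `(n-k) × (n-k)` block. -/
def lrBlock {n : ℕ} (M : Matrix (Fin n) (Fin n) ℝ) (k : ℕ) (hk : k < n) :
    Matrix (Fin (n - k)) (Fin (n - k)) ℝ :=
  M.submatrix (fun i => ⟨k + i.1, by omega⟩) (fun j => ⟨k + j.1, by omega⟩)

lemma offUpper_mul {n : ℕ} (P Q : Matrix (Fin n) (Fin n) ℝ) (k : ℕ) (hk : k < n) :
    offUpper (P * Q) k hk =
      ulBlock P k hk * offUpper Q k hk + offUpper P k hk * lrBlock Q k hk := by
  ext i j
  simp only [offUpper, ulBlock, lrBlock, submatrix_apply, Matrix.add_apply, Matrix.mul_apply]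
  exact finSplit hk _

lemma offUpper_one {n : ℕ} (k : ℕ) (hk : k < n) :
    offUpper (1 : Matrix (Fin n) (Fin n) ℝ) k hk = 0 := by
  ext i j
  show (1 : Matrix (Fin n) (Fin n) ℝ) _ _ = 0
  rw [Matrix.one_apply_ne]
  intro h
  have := congrArg Fin.val h
  simp only [] at this
  omega

lemma matrixRankAddLe {m p : Type*} [Fintype m] [Fintype p] (A B : Matrix m p ℝ) :
    (A + B).rank ≤ A.rank + B.rank := by
  classical
  rw [Matrix.rank, Matrix.rank, Matrix.rank, Matrix.mulVecLin_add]
  have hle : LinearMap.range (A.mulVecLin + B.mulVecLin) ≤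
      LinearMap.range A.mulVecLin ⊔ LinearMap.range B.mulVecLin := by
    rintro x ⟨y, rfl⟩
    exact Submodule.mem_sup.2 ⟨A.mulVecLin y, ⟨y, rfl⟩, B.mulVecLin y, ⟨y, rfl⟩, rfl⟩
  exact le_trans (Submodule.finrank_mono hle)
    (Submodule.finrank_add_le_finrank_add_finrank _ _)

lemma matrixRankSmulLe {m p : Type*} [Fintype m] [Fintype p] [DecidableEq m]
    (r : ℝ) (N : Matrix m p ℝ) : (r • N).rank ≤ N.rank := by
  have h : r • N = (r • (1 : Matrix m m ℝ)) * N := by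
    rw [Matrix.smul_mul, Matrix.one_mul]
  rw [h]
  exact Matrix.rank_mul_le_right _ _

/-- A matrix whose entries vanish outside a band of width `b` has off-diagonal
blocks of rank at most `b`. -/
lemma rank_offUpper_le_of_band {n : ℕ} (W : Matrix (Fin n) (Fin n) ℝ) (b k : ℕ)
    (hkn : k < n)
    (hW : ∀ i j : Fin n, (b : ℤ) < |(i : ℤ) - (j : ℤ)| → W i j = 0) :
    (offUpper W k hkn).rank ≤ b := by
  classical
  set u : Matrix (Fin k) (Fin b) ℝ :=
    fun i t => if i.1 + t.1 + 1 = k then 1 else 0 with hu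
  set v : Matrix (Fin b) (Fin (n - k)) ℝ :=
    fun t j => if h : t.1 + 1 ≤ k then W ⟨k - 1 - t.1, by omega⟩ ⟨k + j.1, by omega⟩ else 0
    with hv
  have hfac : offUpper W k hkn = u * v := by
    ext i j
    rw [Matrix.mul_apply]
    by_cases hik : k ≤ i.1 + b
    · have ht0 : k - 1 - i.1 < b := by omega
      have hsum : ∀ t : Fin b, u i t * v t j =
          if t = (⟨k - 1 - i.1, ht0⟩ : Fin b) then v t j else 0 := by
        intro t
        have hiff : (i.1 + t.1 + 1 = k) ↔ t = (⟨k - 1 - i.1, ht0⟩ : Fin b) := by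
          rw [Fin.ext_iff]
          simp only []
          omega
        rw [hu]
        simp only []
        rw [if_congr hiff rfl rfl, ite_mul, one_mul, zero_mul]
      rw [Finset.sum_congr rfl (fun t _ => hsum t), Finset.sum_ite_eq' Finset.univ _ _]
      simp only [Finset.mem_univ, if_true]
      rw [hv]
      simp only []
      rw [dif_pos (by omega : k - 1 - i.1 + 1 ≤ k)]
      show W ⟨i.1, _⟩ ⟨k + j.1, _⟩ = _
      congr 1
      apply Fin.ext
      simp only []
      omega
    · have hz : ∀ t : Fin b, u i t * v t j = 0 := by
        intro t
        rw [hu]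
        simp only []
        rw [if_neg (by omega), zero_mul]
      rw [Finset.sum_congr rfl (fun t _ => hz t), Finset.sum_const_zero]
      show W ⟨i.1, _⟩ ⟨k + j.1, _⟩ = 0
      apply hW
      rw [lt_abs]
      right
      simp only []
      push_cast
      omega
  rw [hfac]
  refine le_trans (Matrix.rank_mul_le_left u v) ?_
  refine le_trans (Matrix.rank_le_card_width u) ?_
  simp

/-- For a symmetric tridiagonal `X ∈ ℝ^{n×n}`, scalars `α, β ∈ ℝ`, `c > 0`,
and every `1 ≤ k < n`, the off-diagonal blocks of `α X + β X (I + c X²)⁻¹` have rank at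
most `3`. In particular, the first QDWH iterate of a symmetric tridiagonal matrix has all
off-diagonal blocks of rank at most `3`. -/
theorem offdiag_rank_first_qdwh_iterate {n : ℕ} (X : Matrix (Fin n) (Fin n) ℝ)
    (hsymm : Xᵀ = X)
    (htri : ∀ i j : Fin n, (1 : ℤ) < |(i : ℤ) - (j : ℤ)| → X i j = 0)
    (α β c : ℝ) (hc : 0 < c)
    (k : ℕ) (hk1 : 1 ≤ k) (hkn : k < n) :
    (offUpper (α • X + β • (X * (1 + c • X ^ 2)⁻¹)) k hkn).rank ≤ 3 ∧
    (offLower (α • X + β • (X * (1 + c • X ^ 2)⁻¹)) k hkn).rank ≤ 3 := by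
  classical
  set A : Matrix (Fin n) (Fin n) ℝ := 1 + c • X ^ 2 with hA
  set B : Matrix (Fin n) (Fin n) ℝ := A⁻¹ with hB
  -- symmetry facts
  have hX2T : (X ^ 2)ᵀ = X ^ 2 := by rw [Matrix.transpose_pow, hsymm]
  have hAT : Aᵀ = A := by rw [hA, Matrix.transpose_add, Matrix.transpose_one,
    Matrix.transpose_smul, hX2T]
  have hAsym : ∀ a b : Fin n, A a b = A b a := fun a b => by
    conv_lhs => rw [← hAT]
    rfl
  -- A is positive definite
  have hApos : A.PosDef := by
    refine Matrix.PosDef.of_dotProduct_mulVec_pos ?_ ?_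
    · show Aᴴ = A
      have h1 : Aᴴ = Aᵀ := by
        ext i j
        simp [Matrix.conjTranspose_apply]
      rw [h1, hAT]
    · intro x hx
      have hmv : A *ᵥ x = x + c • (X *ᵥ (X *ᵥ x)) := by
        rw [hA, Matrix.add_mulVec, Matrix.one_mulVec, Matrix.smul_mulVec,
          pow_two, ← Matrix.mulVec_mulVec]
      have hsx : star x = x := by ext l; simp
      rw [hmv, dotProduct_add, hsx]
      have hdp : x ⬝ᵥ (X *ᵥ (X *ᵥ x)) = (X *ᵥ x) ⬝ᵥ (X *ᵥ x) := by
        rw [dotProduct_mulVec]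
        congr 1
        rw [← Matrix.mulVec_transpose, hsymm]
      have h1 : (0 : ℝ) < x ⬝ᵥ x := by
        have := dotProduct_star_self_pos_iff (v := x) (R := ℝ)
        rw [hsx] at this
        exact this.2 hx
      have h2 : (0 : ℝ) ≤ x ⬝ᵥ (c • (X *ᵥ (X *ᵥ x))) := by
        rw [dotProduct_smul, hdp, smul_eq_mul]
        have hnn : (0 : ℝ) ≤ (X *ᵥ x) ⬝ᵥ (X *ᵥ x) := by
          have := dotProduct_star_self_nonneg (v := (X *ᵥ x)) (R := ℝ)
          have hsy : star (X *ᵥ x) = X *ᵥ x := by ext l; simp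
          rwa [hsy] at this
        exact mul_nonneg hc.le hnn
      linarith
  have hdet : IsUnit A.det := (Matrix.isUnit_iff_isUnit_det _).1 hApos.isUnit
  have hABone : A * B = 1 := Matrix.mul_nonsing_inv A hdet
  have hBAone : B * A = 1 := Matrix.nonsing_inv_mul A hdet
  -- X commutes with A and B
  have hXA : X * A = A * X := by
    rw [hA, mul_add, add_mul, mul_one, one_mul, Matrix.mul_smul, Matrix.smul_mul,
      ((Commute.refl X).pow_right 2).eq]
  have hXB : X * B = B * X := by
    have h1 : A * (X * B) = X := by
      rw [← Matrix.mul_assoc, ← hXA, Matrix.mul_assoc, hABone, mul_one]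
    calc X * B = (B * A) * (X * B) := by rw [hBAone, one_mul]
      _ = B * (A * (X * B)) := by rw [Matrix.mul_assoc]
      _ = B * X := by rw [h1]
  have hBT : Bᵀ = B := by rw [hB, Matrix.transpose_nonsing_inv, hAT]
  set M : Matrix (Fin n) (Fin n) ℝ := α • X + β • (X * B) with hM
  have hMT : Mᵀ = M := by
    rw [hM, Matrix.transpose_add, Matrix.transpose_smul, Matrix.transpose_smul,
      Matrix.transpose_mul, hBT, hsymm, ← hXB]
  set C : Matrix (Fin n) (Fin n) ℝ := α • (1 : Matrix (Fin n) (Fin n) ℝ) + β • B with hC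
  have hMXC : M = X * C := by
    rw [hM, hC, mul_add, Matrix.mul_smul, Matrix.mul_smul, mul_one]
  -- A is banded with bandwidth 2 (and so is -A)
  have hAband : ∀ i j : Fin n, (2 : ℤ) < |(i : ℤ) - (j : ℤ)| → ((-1 : ℝ) • A) i j = 0 := by
    intro i j hij
    have hne : i ≠ j := by
      intro h
      subst h
      simp at hij
    have hij' : 2 < (i : ℤ) - j ∨ 2 < (j : ℤ) - i := by
      rw [lt_abs] at hij
      omega
    have hX2ij : (X ^ 2) i j = 0 := by
      rw [pow_two, Matrix.mul_apply]
      apply Finset.sum_eq_zero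
      intro t _
      by_cases hit : (1 : ℤ) < |(i : ℤ) - (t : ℤ)|
      · rw [htri i t hit, zero_mul]
      · refine mul_eq_zero_of_right _ (htri t j ?_)
        rw [lt_abs] at hit ⊢
        push_neg at hit
        omega
    rw [hA]
    simp [Matrix.add_apply, Matrix.one_apply_ne hne, hX2ij]
  -- off-diagonal block of B has rank ≤ 2
  have hblock := offUpper_mul A B k hkn
  rw [hABone, offUpper_one] at hblock
  have hulpos : (ulBlock A k hkn).PosDef := by
    refine Matrix.PosDef.of_dotProduct_mulVec_pos ?_ ?_
    · show (ulBlock A k hkn)ᴴ = ulBlock A k hkn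
      ext i j
      simp only [Matrix.conjTranspose_apply, ulBlock, submatrix_apply, star_trivial]
      exact hAsym _ _
    · intro y hy
      set x : Fin n → ℝ := fun l => if h : l.1 < k then y ⟨l.1, h⟩ else 0 with hx
      have hxi : ∀ (m : Fin n) (h : m.1 < k), x m = y ⟨m.1, h⟩ := by
        intro m h
        rw [hx]
        simp only []
        rw [dif_pos h]
      have hxj : ∀ (m : Fin n), k ≤ m.1 → x m = 0 := by
        intro m h
        rw [hx]
        simp only []
        rw [dif_neg (by omega)]
      have hxne : x ≠ 0 := by
        intro h0
        apply hy
        ext i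
        have h1 := congrFun h0 ⟨i.1, i.2.trans hkn⟩
        rw [hxi _ i.2] at h1
        simpa using h1
      have hsx : star x = x := by ext l; simp
      have hsy : star y = y := by ext l; simp
      have hmv : ∀ i : Fin k,
          (A *ᵥ x) ⟨i.1, i.2.trans hkn⟩ = ((ulBlock A k hkn) *ᵥ y) i := by
        intro i
        show ∑ l, A ⟨i.1, i.2.trans hkn⟩ l * x l = ∑ i', ulBlock A k hkn i i' * y i'
        rw [finSplit hkn (fun l => A ⟨i.1, i.2.trans hkn⟩ l * x l)]
        have hz : ∑ j : Fin (n - k),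
            A ⟨i.1, i.2.trans hkn⟩ ⟨k + j.1, by omega⟩ * x ⟨k + j.1, by omega⟩ = 0 := by
          apply Finset.sum_eq_zero
          intro j _
          rw [hxj _ (by simp), mul_zero]
        rw [hz, add_zero]
        refine Finset.sum_congr rfl fun i' _ => ?_
        rw [hxi _ i'.2]
        rfl
      have key : star y ⬝ᵥ ((ulBlock A k hkn) *ᵥ y) = star x ⬝ᵥ (A *ᵥ x) := by
        rw [hsx, hsy]
        show ∑ i, y i * ((ulBlock A k hkn) *ᵥ y) i = ∑ l, x l * (A *ᵥ x) l
        rw [finSplit hkn (fun l => x l * (A *ᵥ x) l)]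
        have hz : ∑ j : Fin (n - k),
            x ⟨k + j.1, by omega⟩ * (A *ᵥ x) ⟨k + j.1, by omega⟩ = 0 := by
          apply Finset.sum_eq_zero
          intro j _
          rw [hxj _ (by simp), zero_mul]
        rw [hz, add_zero]
        refine Finset.sum_congr rfl fun i _ => ?_
        rw [hxi _ i.2, hmv i]
      rw [key]
      exact hApos.dotProduct_mulVec_pos hxne
  have huldet : IsUnit (ulBlock A k hkn).det :=
    (Matrix.isUnit_iff_isUnit_det _).1 hulpos.isUnit
  have hUB : offUpper B k hkn =
      (ulBlock A k hkn)⁻¹ * (offUpper ((-1 : ℝ) • A) k hkn * lrBlock B k hkn) := by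
    have h1 : ulBlock A k hkn * offUpper B k hkn =
        offUpper ((-1 : ℝ) • A) k hkn * lrBlock B k hkn := by
      have h2 : offUpper ((-1 : ℝ) • A) k hkn = (-1 : ℝ) • offUpper A k hkn := by
        ext i j; rfl
      rw [h2, Matrix.smul_mul, neg_one_smul]
      have h3 : ulBlock A k hkn * offUpper B k hkn = -(offUpper A k hkn * lrBlock B k hkn) :=
        eq_neg_of_add_eq_zero_left hblock.symm
      exact h3
    calc offUpper B k hkn
        = (ulBlock A k hkn)⁻¹ * (ulBlock A k hkn * offUpper B k hkn) := by
          rw [← Matrix.mul_assoc, Matrix.nonsing_inv_mul _ huldet, Matrix.one_mul]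
      _ = (ulBlock A k hkn)⁻¹ * (offUpper ((-1 : ℝ) • A) k hkn * lrBlock B k hkn) := by
          rw [h1]
  have hrB : (offUpper B k hkn).rank ≤ 2 := by
    rw [hUB]
    refine le_trans (Matrix.rank_mul_le_right _ _) ?_
    refine le_trans (Matrix.rank_mul_le_left _ _) ?_
    exact rank_offUpper_le_of_band _ 2 k hkn hAband
  -- off-diagonal of C
  have hUC : offUpper C k hkn = β • offUpper B k hkn := by
    ext i j
    show (α • (1 : Matrix (Fin n) (Fin n) ℝ) + β • B) _ _ = β * B _ _
    have hne : (⟨i.1, i.2.trans hkn⟩ : Fin n) ≠ ⟨k + j.1, by omega⟩ := by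
      intro h
      have := congrArg Fin.val h
      simp only [] at this
      omega
    simp [Matrix.add_apply, Matrix.one_apply_ne hne]
  have hrC : (offUpper C k hkn).rank ≤ 2 := by
    rw [hUC]
    exact le_trans (matrixRankSmulLe β _) hrB
  have hrX : (offUpper X k hkn).rank ≤ 1 :=
    rank_offUpper_le_of_band X 1 k hkn htri
  -- final bound for the upper block
  have hup : (offUpper M k hkn).rank ≤ 3 := by
    have hUM : offUpper M k hkn =
        ulBlock X k hkn * offUpper C k hkn + offUpper X k hkn * lrBlock C k hkn := by
      rw [hMXC, offUpper_mul]
    rw [hUM]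
    refine le_trans (matrixRankAddLe _ _) ?_
    have h1 : (ulBlock X k hkn * offUpper C k hkn).rank ≤ 2 :=
      le_trans (Matrix.rank_mul_le_right _ _) hrC
    have h2 : (offUpper X k hkn * lrBlock C k hkn).rank ≤ 1 :=
      le_trans (Matrix.rank_mul_le_left _ _) hrX
    omega
  refine ⟨hup, ?_⟩
  have hlow : offLower M k hkn = (offUpper M k hkn)ᵀ := by
    ext i j
    show M ⟨k + i.1, by omega⟩ ⟨j.1, j.2.trans hkn⟩ = M ⟨j.1, j.2.trans hkn⟩ ⟨k + i.1, by omega⟩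
    conv_lhs => rw [← hMT]
    rfl
  rw [hlow, Matrix.rank_transpose]
  exact hup
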